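/- The Kahan discretization of the Lotka-Volterra system with step 2ε, defined implicitly by ỹ_j − y_j = ε y_j (∑_{k>j} ỹ_k − ∑_{k<j} ỹ_k) + ε ỹ_j (∑_{k>j} y_k − ∑_{k<j} y_k), is explicitly solved by ỹ_j = y_j (1−εH)(1+εH) / ((1−εH+2ε u_{j−1})(1−εH+2ε u_j)), where u_j = y_1+⋯+y_j, u_0 = 0, H = u_m, provided the denominators are nonzero. -/

import Mathlib

lemma sum_Ioc_eq' (f : ℕ → ℝ) {n m : ℕ} (h2 : n ≤ m) :
    ∑ k ∈ Finset.Ioc n m, f k = (∑ l ∈ Finset.Icc 1 m, f l) - ∑ l ∈ Finset.Icc 1 n, f l := by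
  have h1 : Finset.Icc 1 n = Finset.Ioc 0 n := by rw [← Finset.Icc_add_one_left_eq_Ioc]; rfl
  have h1' : Finset.Icc 1 m = Finset.Ioc 0 m := by rw [← Finset.Icc_add_one_left_eq_Ioc]; rfl
  rw [h1, h1', eq_sub_iff_add_eq, add_comm]
  exact Finset.sum_Ioc_consecutive f (Nat.zero_le n) h2

/-- `u_j = y_1 + ⋯ + y_j` (1-based indexing; `usum y 0 = 0`). -/
noncomputable def usum (y : ℕ → ℝ) (j : ℕ) : ℝ := ∑ l ∈ Finset.Icc 1 j, y l

theorem kahan_explicit (m : ℕ) (ε : ℝ) (y ty : ℕ → ℝ)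
    (hden : ∀ j ≤ m, 1 - ε * usum y m + 2 * ε * usum y j ≠ 0)
    (himp : ∀ j ∈ Finset.Icc 1 m,
      ty j - y j = ε * y j * ((∑ k ∈ Finset.Ioc j m, ty k) - ∑ k ∈ Finset.Ico 1 j, ty k)
        + ε * ty j * ((∑ k ∈ Finset.Ioc j m, y k) - ∑ k ∈ Finset.Ico 1 j, y k)) :
    ∀ j ∈ Finset.Icc 1 m,
      ty j = y j * ((1 - ε * usum y m) * (1 + ε * usum y m)) /
        ((1 - ε * usum y m + 2 * ε * usum y (j - 1)) * (1 - ε * usum y m + 2 * ε * usum y j)) := by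
  set H := usum y m with hH
  set T : ℕ → ℝ := fun n => ∑ l ∈ Finset.Icc 1 n, ty l with hT
  have hTsucc : ∀ n : ℕ, T (n + 1) = T n + ty (n + 1) := by
    intro n
    simp only [hT]
    exact Finset.sum_Icc_succ_top (Nat.succ_le_succ (Nat.zero_le n)) ty
  have husucc : ∀ n : ℕ, usum y (n + 1) = usum y n + y (n + 1) := by
    intro n
    simp only [usum]
    exact Finset.sum_Icc_succ_top (Nat.succ_le_succ (Nat.zero_le n)) y
  have key : ∀ n, n ≤ m →
      T n * (1 - ε * H + 2 * ε * usum y n) = usum y n * (1 + ε * T m) := by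
    intro n
    induction n with
    | zero =>
      intro _
      simp [hT, usum]
    | succ i ih =>
      intro hle
      have hi : i ≤ m := Nat.le_of_succ_le hle
      have ihe := ih hi
      have heq := himp (i + 1) (Finset.mem_Icc.mpr ⟨Nat.succ_le_succ (Nat.zero_le i), hle⟩)
      rw [sum_Ioc_eq' ty hle, sum_Ioc_eq' y hle, Finset.Ico_add_one_right_eq_Icc] at heq
      have e1 : ∑ l ∈ Finset.Icc 1 m, ty l = T m := rfl
      have e2 : ∑ l ∈ Finset.Icc 1 (i+1), ty l = T (i+1) := rfl
      have e3 : ∑ l ∈ Finset.Icc 1 i, ty l = T i := rfl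
      have e4 : ∑ l ∈ Finset.Icc 1 m, y l = H := rfl
      have e5 : ∑ l ∈ Finset.Icc 1 (i+1), y l = usum y (i+1) := rfl
      have e6 : ∑ l ∈ Finset.Icc 1 i, y l = usum y i := rfl
      rw [e1, e2, e3, e4, e5, e6, hTsucc, husucc] at heq
      rw [hTsucc, husucc]
      linear_combination ihe + heq
  have hTm : T m = H := by
    have := key m le_rfl
    rw [← hH] at this
    linarith [this]
  intro j hj
  rw [Finset.mem_Icc] at hj
  obtain ⟨i, rfl⟩ : ∃ i, j = i + 1 := ⟨j - 1, (Nat.succ_pred_eq_of_pos hj.1).symm⟩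
  have hle : i + 1 ≤ m := hj.2
  have hi : i ≤ m := Nat.le_of_succ_le hle
  have k1 := key (i+1) hle
  have k2 := key i hi
  rw [hTm] at k1 k2
  have d1 := hden (i+1) hle
  have d2 := hden i hi
  have hty : ty (i+1) = T (i+1) - T i := by rw [hTsucc]; ring
  have hu : usum y (i+1) = usum y i + y (i+1) := husucc i
  rw [hty, Nat.add_sub_cancel]
  rw [hu] at k1 d1 ⊢
  rw [eq_div_iff (mul_ne_zero d2 d1)]
  linear_combination (1 - ε*H + 2*ε*usum y i) * k1 - (1 - ε*H + 2*ε*(usum y i + y (i+1))) * k2
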